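/- Let H be a separable real Hilbert space, let (e_k)_{k ≥ 1} be an orthonormal sequence in H, let B₁ and B₂ be bounded linear operators on H, let a, w ∈ H, let q₀ > 0, let q₁, q₂ be real numbers with |q₁| > q₀ and |q₂| > q₀, and for j = 1, 2 let (λ_{j,n})_{n ≥ 1} be sequences of complex numbers with Re(λ_{j,n}) > 0 for all n and λ_{j,n} → −iq_j as n → ∞. Then there exists N such that for all n ≥ N: | exp( ∑_{j=1}^{2} ( ((λ_{j,n} − 1)/(2λ_{j,n})) ∑_{k=1}^{n} ⟨e_k, B_j w⟩² − (1/2)‖B_j w‖² + i λ_{j,n}^{−1/2} ∑_{k=1}^{n} ⟨e_k, B_j w⟩ ⟨e_k, a⟩ + i ⟨e_{n+1}, a⟩ · √( ‖B_j w‖² − ∑_{k=1}^{n} ⟨e_k, B_j w⟩² ) ) ) | ≤ k(q₀; w), where the square root is the real square root of a nonnegative quantity (nonnegative by Bessel's inequality). -/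

import Mathlib

open scoped RealInnerProductSpace

/-- The dominating function `k(q₀; w)` of equation (3.10) of the paper. -/
noncomputable def kfun {H : Type*} [NormedAddCommGroup H] [InnerProductSpace ℝ H]
    (B₁ B₂ : H →L[ℝ] H) (a : H) (q₀ : ℝ) (w : H) : ℝ :=
  Real.exp ((2 * q₀) ^ (-(1 : ℝ) / 2) * ‖B₁‖ * ‖w‖ * ‖a‖
    + (2 * q₀) ^ (-(1 : ℝ) / 2) * ‖B₂‖ * ‖w‖ * ‖a‖)


lemma im_cpow_half_le {l : ℂ} (hre : 0 < l.re) :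
    |(l ^ (-(1:ℂ)/2)).im| ≤ (2 * ‖l‖) ^ (-(1:ℝ)/2) := by
  have hl0 : l ≠ 0 := fun h => by simp [h] at hre
  have habspos : 0 < ‖l‖ := norm_pos_iff.mpr hl0
  set z := l ^ (-(1:ℂ)/2) with hz
  have hsq : z * z = l⁻¹ := by
    rw [hz, ← Complex.cpow_add _ _ hl0]
    norm_num
    exact Complex.cpow_neg_one l
  have habs : ‖z‖ = ‖l‖ ^ (-(1:ℝ)/2) := by
    rw [hz, Complex.norm_cpow_of_ne_zero hl0]
    norm_num
  have h1 : 0 < (z*z).re := by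
    rw [hsq, Complex.inv_re]
    have := Complex.normSq_pos.2 hl0
    positivity
  have h2 : z.im^2 < z.re^2 := by
    rw [Complex.mul_re] at h1; nlinarith
  have h3 : z.im^2 ≤ (‖z‖)^2 / 2 := by
    have h4 := Complex.sq_norm z
    rw [Complex.normSq_apply] at h4
    nlinarith
  have h5 : (‖z‖)^2 = (‖l‖)⁻¹ := by
    rw [habs, ← Real.rpow_natCast (‖l‖ ^ (-(1:ℝ)/2)) 2, ← Real.rpow_mul habspos.le]
    norm_num
    rw [Real.rpow_neg_one]
  have h6 : ((2 * ‖l‖) ^ (-(1:ℝ)/2)) ^ 2 = (2 * ‖l‖)⁻¹ := by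
    rw [← Real.rpow_natCast ((2*‖l‖) ^ (-(1:ℝ)/2)) 2, ← Real.rpow_mul (by positivity)]
    norm_num
    rw [Real.rpow_neg_one, mul_inv]; ring
  have h7 : z.im^2 ≤ ((2 * ‖l‖) ^ (-(1:ℝ)/2)) ^ 2 := by
    rw [h6, mul_inv]
    rw [h5] at h3
    linarith [h3]
  calc |z.im| = Real.sqrt (z.im^2) := (Real.sqrt_sq_eq_abs _).symm
    _ ≤ Real.sqrt (((2 * ‖l‖) ^ (-(1:ℝ)/2)) ^ 2) := Real.sqrt_le_sqrt h7
    _ = (2 * ‖l‖) ^ (-(1:ℝ)/2) := Real.sqrt_sq (by positivity)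

lemma term_re_le {l : ℂ} (hre : 0 < l.re) {q₀ : ℝ} (hq₀ : 0 < q₀) (habs : q₀ < ‖l‖)
    {S T K M c s : ℝ} (hS0 : 0 ≤ S) (hS : S ≤ M^2) (hT : |T| ≤ K) (hK : 0 ≤ K) :
    (((l - 1) / (2 * l)) * (S:ℂ) - (M:ℂ)^2/2 + Complex.I * l ^ (-(1:ℂ)/2) * (T:ℂ)
      + Complex.I * (c:ℂ) * (s:ℂ)).re ≤ (2*q₀) ^ (-(1:ℝ)/2) * K := by
  have hl0 : l ≠ 0 := fun h => by simp [h] at hre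
  have hre_eq : (((l - 1) / (2 * l)) * (S:ℂ) - (M:ℂ)^2/2 + Complex.I * l ^ (-(1:ℂ)/2) * (T:ℂ)
      + Complex.I * (c:ℂ) * (s:ℂ)).re
      = ((l-1)/(2*l)).re * S - M^2/2 - (l ^ (-(1:ℂ)/2)).im * T := by
    have hcast : ((M:ℂ)^2)/2 = ((M^2/2 : ℝ) : ℂ) := by push_cast; ring
    rw [hcast]
    simp [Complex.add_re, Complex.sub_re, Complex.mul_re, Complex.mul_im,
      Complex.I_re, Complex.I_im, Complex.ofReal_re, Complex.ofReal_im,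
      ← Complex.ofReal_pow]
    ring
  rw [hre_eq]
  have hhalf : ((l-1)/(2*l)).re ≤ 1/2 := by
    have h : (l-1)/(2*l) = 1/2 - (2*l)⁻¹ := by field_simp
    have h2 : 0 ≤ ((2*l)⁻¹).re := by
      rw [Complex.inv_re]
      apply div_nonneg
      · rw [Complex.mul_re]; simp [hre.le]
      · exact Complex.normSq_nonneg _
    have h3 : ((l-1)/(2*l)).re = 1/2 - ((2*l)⁻¹).re := by
      rw [h, Complex.sub_re]
      norm_num
    rw [h3]
    linarith
  have h1 : ((l-1)/(2*l)).re * S ≤ M^2/2 := by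
    calc ((l-1)/(2*l)).re * S ≤ (1/2) * S := mul_le_mul_of_nonneg_right hhalf hS0
      _ ≤ M^2/2 := by linarith
  have h2 : -((l ^ (-(1:ℂ)/2)).im * T) ≤ (2*q₀) ^ (-(1:ℝ)/2) * K := by
    calc -((l ^ (-(1:ℂ)/2)).im * T) ≤ |(l ^ (-(1:ℂ)/2)).im * T| := neg_le_abs _
      _ = |(l ^ (-(1:ℂ)/2)).im| * |T| := abs_mul _ _
      _ ≤ (2 * ‖l‖) ^ (-(1:ℝ)/2) * K :=
          mul_le_mul (im_cpow_half_le hre) hT (abs_nonneg _) (by positivity)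
      _ ≤ (2*q₀) ^ (-(1:ℝ)/2) * K := by
          apply mul_le_mul_of_nonneg_right _ hK
          exact Real.rpow_le_rpow_of_nonpos (by positivity) (by linarith) (by norm_num)
  linarith

/-- The eventual domination bound of Remark 4.1 of the paper: for sequences
`λ_{j,n} → −iqⱼ` with positive real parts, the exponential expression arising in
the proof of Theorem 4.2 is eventually bounded by `k(q₀; w)`.  (The paper's
orthonormal vectors `e₁, …, eₙ` correspond to `e 0, …, e (n-1)` and `e_{n+1}`
to `e n`.) -/
theorem stmt13 {H : Type*} [NormedAddCommGroup H] [InnerProductSpace ℝ H]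
    [TopologicalSpace.SeparableSpace H]
    (e : ℕ → H) (he : Orthonormal ℝ e)
    (B₁ B₂ : H →L[ℝ] H) (a w : H) (q₀ : ℝ) (hq₀ : 0 < q₀)
    (q₁ q₂ : ℝ) (hq₁ : q₀ < |q₁|) (hq₂ : q₀ < |q₂|)
    (l₁ l₂ : ℕ → ℂ)
    (h₁re : ∀ n, 0 < (l₁ n).re) (h₂re : ∀ n, 0 < (l₂ n).re)
    (h₁lim : Filter.Tendsto l₁ Filter.atTop (nhds (-Complex.I * q₁)))
    (h₂lim : Filter.Tendsto l₂ Filter.atTop (nhds (-Complex.I * q₂))) :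
    ∃ N : ℕ, ∀ n ≥ N,
      ‖
        (Complex.exp
          ((((l₁ n - 1) / (2 * l₁ n))
              * ((∑ k ∈ Finset.range n, (⟪e k, B₁ w⟫ : ℝ) ^ 2 : ℝ) : ℂ)
            - ((‖B₁ w‖ : ℂ) ^ 2) / 2
            + Complex.I * (l₁ n) ^ (-(1 : ℂ) / 2)
                * ((∑ k ∈ Finset.range n, (⟪e k, B₁ w⟫ : ℝ) * ⟪e k, a⟫ : ℝ) : ℂ)
            + Complex.I * ((⟪e n, a⟫ : ℝ) : ℂ)
                * ((Real.sqrt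
                    (‖B₁ w‖ ^ 2 - ∑ k ∈ Finset.range n, (⟪e k, B₁ w⟫ : ℝ) ^ 2) : ℝ) : ℂ))
          + (((l₂ n - 1) / (2 * l₂ n))
              * ((∑ k ∈ Finset.range n, (⟪e k, B₂ w⟫ : ℝ) ^ 2 : ℝ) : ℂ)
            - ((‖B₂ w‖ : ℂ) ^ 2) / 2
            + Complex.I * (l₂ n) ^ (-(1 : ℂ) / 2)
                * ((∑ k ∈ Finset.range n, (⟪e k, B₂ w⟫ : ℝ) * ⟪e k, a⟫ : ℝ) : ℂ)
            + Complex.I * ((⟪e n, a⟫ : ℝ) : ℂ)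
                * ((Real.sqrt
                    (‖B₂ w‖ ^ 2 - ∑ k ∈ Finset.range n, (⟪e k, B₂ w⟫ : ℝ) ^ 2) : ℝ) : ℂ))))‖
      ≤ kfun B₁ B₂ a q₀ w := by
  have key : ∀ (q : ℝ) (l : ℕ → ℂ), q₀ < |q| →
      Filter.Tendsto l Filter.atTop (nhds (-Complex.I * q)) →
      ∀ᶠ n in Filter.atTop, q₀ < ‖l n‖ := by
    intro q l hq hlim
    have h1 : Filter.Tendsto (fun n => ‖l n‖) Filter.atTop
        (nhds (‖-Complex.I * q‖)) :=
      (continuous_norm.tendsto _).comp hlim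
    have h2 : ‖-Complex.I * q‖ = |q| := by
      simp
    rw [h2] at h1
    exact h1.eventually (eventually_gt_nhds hq)
  obtain ⟨N, hN⟩ := Filter.eventually_atTop.1 ((key q₁ l₁ hq₁ h₁lim).and (key q₂ l₂ hq₂ h₂lim))
  refine ⟨N, fun n hn => ?_⟩
  obtain ⟨ha1, ha2⟩ := hN n hn
  rw [Complex.norm_exp, kfun]
  apply Real.exp_le_exp.2
  rw [Complex.add_re]
  have bound : ∀ (B : H →L[ℝ] H) (l : ℂ), 0 < l.re → q₀ < ‖l‖ →
      (((l - 1) / (2 * l)) * ((∑ k ∈ Finset.range n, (⟪e k, B w⟫ : ℝ) ^ 2 : ℝ) : ℂ)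
        - ((‖B w‖ : ℂ) ^ 2) / 2
        + Complex.I * l ^ (-(1:ℂ)/2)
            * ((∑ k ∈ Finset.range n, (⟪e k, B w⟫ : ℝ) * ⟪e k, a⟫ : ℝ) : ℂ)
        + Complex.I * ((⟪e n, a⟫ : ℝ) : ℂ)
            * ((Real.sqrt (‖B w‖^2 - ∑ k ∈ Finset.range n, (⟪e k, B w⟫ : ℝ)^2) : ℝ) : ℂ)).re
      ≤ (2*q₀) ^ (-(1:ℝ)/2) * ‖B‖ * ‖w‖ * ‖a‖ := by
    intro B l hlre hlabs
    have hS : (∑ k ∈ Finset.range n, (⟪e k, B w⟫ : ℝ)^2) ≤ ‖B w‖^2 := by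
      have := he.sum_inner_products_le (s := Finset.range n) (B w)
      simpa [Real.norm_eq_abs, sq_abs] using this
    have hsa : (∑ k ∈ Finset.range n, (⟪e k, a⟫ : ℝ)^2) ≤ ‖a‖^2 := by
      have := he.sum_inner_products_le (s := Finset.range n) a
      simpa [Real.norm_eq_abs, sq_abs] using this
    have hS0 : 0 ≤ ∑ k ∈ Finset.range n, (⟪e k, B w⟫ : ℝ)^2 :=
      Finset.sum_nonneg fun _ _ => sq_nonneg _
    have hsa0 : 0 ≤ ∑ k ∈ Finset.range n, (⟪e k, a⟫ : ℝ)^2 :=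
      Finset.sum_nonneg fun _ _ => sq_nonneg _
    have h1 : Real.sqrt (∑ k ∈ Finset.range n, (⟪e k, B w⟫ : ℝ)^2) ≤ ‖B w‖ := by
      rw [show (‖B w‖:ℝ) = Real.sqrt (‖B w‖^2) from (Real.sqrt_sq (norm_nonneg _)).symm]
      exact Real.sqrt_le_sqrt hS
    have h2 : Real.sqrt (∑ k ∈ Finset.range n, (⟪e k, a⟫ : ℝ)^2) ≤ ‖a‖ := by
      rw [show (‖a‖:ℝ) = Real.sqrt (‖a‖^2) from (Real.sqrt_sq (norm_nonneg _)).symm]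
      exact Real.sqrt_le_sqrt hsa
    have hT : |∑ k ∈ Finset.range n, (⟪e k, B w⟫ : ℝ) * ⟪e k, a⟫| ≤ ‖B‖ * ‖w‖ * ‖a‖ := by
      calc |∑ k ∈ Finset.range n, (⟪e k, B w⟫ : ℝ) * ⟪e k, a⟫|
          = Real.sqrt ((∑ k ∈ Finset.range n, (⟪e k, B w⟫ : ℝ) * ⟪e k, a⟫)^2) :=
            (Real.sqrt_sq_eq_abs _).symm
        _ ≤ Real.sqrt ((∑ k ∈ Finset.range n, (⟪e k, B w⟫ : ℝ)^2)
              * ∑ k ∈ Finset.range n, (⟪e k, a⟫ : ℝ)^2) :=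
            Real.sqrt_le_sqrt (Finset.sum_mul_sq_le_sq_mul_sq _ _ _)
        _ = Real.sqrt (∑ k ∈ Finset.range n, (⟪e k, B w⟫ : ℝ)^2)
              * Real.sqrt (∑ k ∈ Finset.range n, (⟪e k, a⟫ : ℝ)^2) := Real.sqrt_mul hS0 _
        _ ≤ ‖B w‖ * ‖a‖ := mul_le_mul h1 h2 (Real.sqrt_nonneg _) (norm_nonneg _)
        _ ≤ (‖B‖ * ‖w‖) * ‖a‖ :=
            mul_le_mul_of_nonneg_right (B.le_opNorm w) (norm_nonneg _)
        _ = ‖B‖ * ‖w‖ * ‖a‖ := by ring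
    calc _ ≤ (2*q₀) ^ (-(1:ℝ)/2) * (‖B‖ * ‖w‖ * ‖a‖) :=
          term_re_le hlre hq₀ hlabs hS0 hS hT (by positivity)
      _ = (2*q₀) ^ (-(1:ℝ)/2) * ‖B‖ * ‖w‖ * ‖a‖ := by ring
  exact add_le_add (bound B₁ (l₁ n) (h₁re n) ha1) (bound B₂ (l₂ n) (h₂re n) ha2)
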